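/- Let n ≥ 0 and let M and N be real symmetric (n+1)×(n+1) matrices, with rows and columns indexed by 0, 1, …, n, such that N_{ij} = M_{ij} for all i ≠ j and N_{ii} ≥ M_{ii} for all i. Assume that the n×n principal submatrix of N obtained by deleting row 0 and column 0 is negative definite, and that there exists a vector v ∈ ℝ^{n+1} with vᵀMv > 0. Then (−1)ⁿ·det(N) > 0; that is, det(N) > 0 if n is even and det(N) < 0 if n is odd. -/

import Mathlib

open Matrix

/-- Let `M`, `N` be real symmetric `(n+1)×(n+1)` matrices agreeing off the
diagonal, with `N` having (weakly) larger diagonal entries.  If the principal submatrix of `N`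
obtained by deleting row and column `0` is negative definite, and some vector has positive
`M`-self-intersection, then `(-1)^n * det N > 0`. -/
theorem det_sign_of_negDef_submatrix_increased_diagonal (n : ℕ)
    (M N : Matrix (Fin (n + 1)) (Fin (n + 1)) ℝ)
    (hMsymm : M.IsSymm) (hNsymm : N.IsSymm)
    (hoff : ∀ i j : Fin (n + 1), i ≠ j → N i j = M i j)
    (hdiag : ∀ i : Fin (n + 1), M i i ≤ N i i)
    (hnegdef : ∀ x : Fin n → ℝ, x ≠ 0 →
      x ⬝ᵥ (N.submatrix Fin.succ Fin.succ).mulVec x < 0)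
    (hpos : ∃ v : Fin (n + 1) → ℝ, 0 < v ⬝ᵥ M.mulVec v) :
    0 < (-1 : ℝ) ^ n * N.det := by
  classical
  obtain ⟨v, hv⟩ := hpos
  -- the quadratic form of N dominates that of M
  have hNM : 0 < v ⬝ᵥ N.mulVec v := by
    have hdiagmat : N - M = Matrix.diagonal (fun i => N i i - M i i) := by
      ext i j
      by_cases hij : i = j
      · subst hij; simp
      · simp [Matrix.diagonal, hij, hoff i j hij]
    have hps : (N - M).PosSemidef := by
      rw [hdiagmat]
      exact Matrix.PosSemidef.diagonal (fun i => sub_nonneg.mpr (hdiag i))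
    have h2 := hps.dotProduct_mulVec_nonneg v
    simp only [star_trivial] at h2
    have : v ⬝ᵥ (N - M).mulVec v = v ⬝ᵥ N.mulVec v - v ⬝ᵥ M.mulVec v := by
      rw [Matrix.sub_mulVec, dotProduct_sub]
    rw [this] at h2
    linarith
  -- block decomposition setup
  set D : Matrix (Fin n) (Fin n) ℝ := N.submatrix Fin.succ Fin.succ with hD
  set A : Matrix (Fin 1) (Fin 1) ℝ := Matrix.of (fun _ _ => N 0 0) with hA
  set Bm : Matrix (Fin 1) (Fin n) ℝ := Matrix.of (fun _ j => N 0 j.succ) with hBm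
  set e : Fin 1 ⊕ Fin n ≃ Fin (n + 1) :=
    finSumFinEquiv.trans (finCongr (Nat.add_comm 1 n)) with he
  have he0 : ∀ i : Fin 1, e (Sum.inl i) = 0 := by
    intro i
    apply Fin.ext
    simp [he, finSumFinEquiv, Fin.castAdd, Fin.castLE]
  have he1 : ∀ j : Fin n, e (Sum.inr j) = j.succ := by
    intro j
    apply Fin.ext
    simp [he, finSumFinEquiv, Fin.natAdd]
    omega
  have hblocks : N.submatrix e e = Matrix.fromBlocks A Bm Bmᴴ D := by
    ext i j
    cases i with
    | inl i =>
      cases j with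
      | inl j => simp [Matrix.fromBlocks, hA, he0]
      | inr j => simp [Matrix.fromBlocks, hBm, he0, he1]
    | inr i =>
      cases j with
      | inl j =>
        simp only [Matrix.submatrix_apply, he0, he1, Matrix.fromBlocks_apply₂₁,
          Matrix.conjTranspose_apply, hBm, Matrix.of_apply, star_trivial]
        exact hNsymm.apply 0 i.succ
      | inr j => simp [Matrix.fromBlocks, hD, he1]
  -- -D is positive definite
  have hpd : (-D).PosDef := by
    refine Matrix.PosDef.of_dotProduct_mulVec_pos ?_ ?_
    · apply Matrix.IsHermitian.neg
      show Dᴴ = D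
      ext i j
      simp only [Matrix.conjTranspose_apply, star_trivial, hD, Matrix.submatrix_apply]
      exact (hNsymm.apply j.succ i.succ).symm
    · intro x hx
      have := hnegdef x hx
      simp only [star_trivial, Matrix.neg_mulVec, dotProduct_neg]
      linarith
  haveI instNeg : Invertible (-D) := Matrix.invertibleOfIsUnitDet (-D) hpd.det_pos.ne'.isUnit
  haveI instD : Invertible D := by
    refine ⟨-(⅟(-D)), ?_, ?_⟩
    · have : (-(⅟(-D))) * D = ⅟(-D) * (-D) := by noncomm_ring
      rw [this, invOf_mul_self]
    · have : D * (-(⅟(-D))) = (-D) * ⅟(-D) := by noncomm_ring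
      rw [this, mul_invOf_self]
  have hinvD : (⅟D : Matrix (Fin n) (Fin n) ℝ) = -(⅟(-D)) := by
    apply invOf_eq_right_inv
    have : D * (-(⅟(-D))) = (-D) * ⅟(-D) := by noncomm_ring
    rw [this, mul_invOf_self]
  -- Schur complement
  set T : Matrix (Fin 1) (Fin 1) ℝ := (-A) - (-Bm) * (-D)⁻¹ * (-Bm)ᴴ with hT
  have hnotps : ¬ T.PosSemidef := by
    intro hTps
    have hfb : (Matrix.fromBlocks (-A) (-Bm) (-Bm)ᴴ (-D)).PosSemidef :=
      (Matrix.PosDef.fromBlocks₂₂ (-A) (-Bm) hpd).mpr hTps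
    have hfbeq : Matrix.fromBlocks (-A) (-Bm) (-Bm)ᴴ (-D) = -(N.submatrix e e) := by
      rw [hblocks, Matrix.conjTranspose_neg]
      ext i j
      cases i <;> cases j <;> simp [Matrix.fromBlocks]
    rw [hfbeq] at hfb
    have h2 := hfb.dotProduct_mulVec_nonneg (v ∘ e)
    rw [Matrix.neg_mulVec, Matrix.submatrix_mulVec_equiv] at h2
    have hcomp : ((v ∘ e) ∘ ⇑e.symm) = v := by
      ext i; simp
    rw [hcomp] at h2
    simp only [star_trivial, dotProduct_neg] at h2
    have : (v ∘ e) ⬝ᵥ ((N.mulVec v) ∘ e) = v ⬝ᵥ N.mulVec v :=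
      comp_equiv_dotProduct_comp_equiv _ _ _
    rw [this] at h2
    linarith
  have hT00 : T 0 0 < 0 := by
    by_contra h
    push_neg at h
    apply hnotps
    have hTd : T = Matrix.diagonal (fun _ => T 0 0) := by
      ext i j
      rw [Subsingleton.elim i 0, Subsingleton.elim j 0]
      simp [Matrix.diagonal]
    rw [hTd]
    exact Matrix.PosSemidef.diagonal (fun _ => h)
  -- determinant computation
  have hschur : A - Bm * ⅟D * Bmᴴ = -T := by
    rw [hT, hinvD, Matrix.invOf_eq_nonsing_inv, Matrix.conjTranspose_neg]
    simp only [Matrix.neg_mul, Matrix.mul_neg, neg_neg, sub_neg_eq_add, neg_sub]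
    abel
  have hdet : N.det = D.det * (-(T 0 0)) := by
    have h1 : N.det = (N.submatrix e e).det := (Matrix.det_submatrix_equiv_self e N).symm
    rw [h1, hblocks, Matrix.det_fromBlocks₂₂, hschur]
    congr 1
    rw [Matrix.det_fin_one]
    simp
  rw [hdet]
  have hdetD : (0:ℝ) < (-1:ℝ)^n * D.det := by
    have := hpd.det_pos
    rw [Matrix.det_neg] at this
    simpa using this
  have : (-1:ℝ)^n * (D.det * (-(T 0 0))) = ((-1:ℝ)^n * D.det) * (-(T 0 0)) := by ring
  rw [this]
  exact mul_pos hdetD (by linarith)
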